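/- Let p be an odd prime, ℓ a positive integer not divisible by p, a the remainder of ℓ modulo p, and ν_i := ⌊(a + iℓ)/p⌋ for 0 ≤ i ≤ p−1. Then ν_{p−1} = a + (p−1)⌊ℓ/p⌋, and for all integers i, j with 0 ≤ i, j ≤ p−1 and i + j ≥ p, one has ν_i + ν_j ≤ ν_{p−1} + ν_{i+j+1−p}. -/

import Mathlib

lemma aux_floor_nat_div (m n : ℕ) : ⌊((m : ℝ)) / (n : ℝ)⌋ = ((m / n : ℕ) : ℤ) := by
  have : ⌊((m : ℤ) : ℝ) / ((n : ℕ) : ℝ)⌋ = (m : ℤ) / (n : ℤ) := by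
    rw [← Rat.floor_intCast_div_natCast (m : ℤ) n, ← Rat.floor_cast (α := ℝ),
      Rat.cast_div, Rat.cast_intCast, Rat.cast_natCast]
  rw [show ((m : ℤ) : ℝ) = (m : ℝ) by push_cast; ring] at this
  rw [this, Int.natCast_ediv]

lemma aux_div_add_div_le (x y n : ℕ) : x / n + y / n ≤ (x + y) / n := by
  rcases Nat.eq_zero_or_pos n with h | h
  · simp [h]
  · rw [Nat.le_div_iff_mul_le h, add_mul]
    exact Nat.add_le_add (Nat.div_mul_le_self x n) (Nat.div_mul_le_self y n)

/-- For an odd prime `p`, a positive integer `ℓ` not divisible by `p`, with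
`a` the remainder of `ℓ` mod `p` and `ν_i = ⌊(a + iℓ)/p⌋`, one has
`ν_{p-1} = a + (p-1)·⌊ℓ/p⌋`, and for all `0 ≤ i, j ≤ p-1` with `i + j ≥ p`,
`ν_i + ν_j ≤ ν_{p-1} + ν_{i+j+1-p}`. -/
theorem statement7
    (p : ℕ) (hp : p.Prime) (hodd : Odd p)
    (ℓ : ℕ) (hℓ : 0 < ℓ) (hpℓ : ¬ p ∣ ℓ)
    (a : ℕ) (ha : a = ℓ % p)
    (ν : ℕ → ℤ) (hν : ∀ i, ν i = ⌊((a + i * ℓ : ℕ) : ℝ) / (p : ℝ)⌋) :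
    ν (p - 1) = (a : ℤ) + ((p : ℤ) - 1) * ⌊(ℓ : ℝ) / (p : ℝ)⌋ ∧
      ∀ i j : ℕ, i ≤ p - 1 → j ≤ p - 1 → p ≤ i + j →
        ν i + ν j ≤ ν (p - 1) + ν (i + j + 1 - p) := by
  have hppos : 0 < p := hp.pos
  have hν' : ∀ i, ν i = (((a + i * ℓ) / p : ℕ) : ℤ) := fun i => by
    rw [hν i, aux_floor_nat_div]
  set q := ℓ / p with hq
  have hℓeq : ℓ = p * q + a := by rw [ha, hq]; exact (Nat.div_add_mod ℓ p).symm
  -- value of ν (p-1)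
  have hkey : a + (p - 1) * ℓ = p * (a + (p - 1) * q) := by
    rw [hℓeq]
    have h1 : 1 ≤ p := hppos
    nlinarith [Nat.sub_add_cancel h1]
  have hνp1 : ν (p - 1) = ((a + (p - 1) * q : ℕ) : ℤ) := by
    rw [hν' (p - 1), hkey, Nat.mul_div_cancel_left _ hppos]
  constructor
  · rw [hνp1, aux_floor_nat_div, ← hq, Nat.cast_add, Nat.cast_mul, Nat.cast_sub hppos,
      Nat.cast_one]
  · intro i j hi hj hij
    rw [hν' i, hν' j, hνp1, hν' (i + j + 1 - p)]
    have hsum : (a + i * ℓ) + (a + j * ℓ) = (a + (p - 1) * ℓ) + (a + (i + j + 1 - p) * ℓ) := by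
      have : (p - 1) + (i + j + 1 - p) = i + j := by omega
      nlinarith [this]
    have h1 : (a + i * ℓ) / p + (a + j * ℓ) / p
        ≤ ((a + i * ℓ) + (a + j * ℓ)) / p := aux_div_add_div_le _ _ _
    have h2 : ((a + (p - 1) * ℓ) + (a + (i + j + 1 - p) * ℓ)) / p
        = (a + (p - 1) * q) + (a + (i + j + 1 - p) * ℓ) / p := by
      rw [hkey, Nat.mul_add_div hppos]
    rw [hsum, h2] at h1
    exact_mod_cast h1
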